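/- Let A and Â be k×d real matrices with AA^T = I_k and ÂÂ^T = I_k, let ε̄ ≥ 0, and let g : B_{ℝ^k}(1+ε̄) → ℝ be continuously differentiable with |∂_i g(y)| ≤ C₂ for all i and all y. If ‖A^TA − Â^TÂ‖_F ≤ δ, then for every x ∈ B_{ℝ^d}(1+ε̄) one has Âx, A(Â^TÂx) ∈ closed balls of radius 1+ε̄ and |g(Ax) − g(A Â^T Â x)| ≤ C₂·√k·(1+ε̄)·δ. In particular, setting f(x) := g(Ax) and f̂(x) := g(A(Â^TÂx)), sup_{x ∈ B_{ℝ^d}(1+ε̄)} |f(x) − f̂(x)| ≤ C₂√k(1+ε̄)δ. -/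

import Mathlib

open Matrix

/-- The Frobenius norm of a matrix. -/
noncomputable def frobNorm {n m : ℕ} (M : Matrix (Fin n) (Fin m) ℝ) : ℝ :=
  Real.sqrt (∑ i, ∑ j, M i j ^ 2)

section aux

variable {k d : ℕ}

lemma aux_proj {n : ℕ} (P : Matrix (Fin n) (Fin n) ℝ) (hsym : Pᵀ = P) (hPP : P * P = P)
    (v : Fin n → ℝ) : ∑ i, (P.mulVec v i) ^ 2 ≤ ∑ j, v j ^ 2 := by
  have h2 : P.mulVec v ⬝ᵥ P.mulVec v = v ⬝ᵥ P.mulVec v := by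
    rw [Matrix.dotProduct_mulVec, ← Matrix.mulVec_transpose, hsym, Matrix.mulVec_mulVec,
      hPP, dotProduct_comm]
  have hsq : ∑ j, (P.mulVec v j) ^ 2 = v ⬝ᵥ P.mulVec v := by
    rw [← h2]; simp [dotProduct, sq]
  have hsnn : (0:ℝ) ≤ v ⬝ᵥ P.mulVec v := by
    rw [← hsq]; positivity
  have hT : (0:ℝ) ≤ ∑ j, v j ^ 2 := by positivity
  have hcs : (v ⬝ᵥ P.mulVec v) ^ 2 ≤ (∑ j, v j ^ 2) * (v ⬝ᵥ P.mulVec v) := by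
    have key : (v ⬝ᵥ P.mulVec v) ^ 2 ≤ (∑ j, v j ^ 2) * (∑ j, (P.mulVec v j) ^ 2) :=
      Finset.sum_mul_sq_le_sq_mul_sq Finset.univ v (P.mulVec v)
    rwa [hsq] at key
  have hfin : v ⬝ᵥ P.mulVec v ≤ ∑ j, v j ^ 2 := by nlinarith
  linarith [hsq, hfin]

lemma aux_contract (A : Matrix (Fin k) (Fin d) ℝ) (hA : A * Aᵀ = 1) (v : Fin d → ℝ) :
    ∑ i, (A.mulVec v i) ^ 2 ≤ ∑ j, v j ^ 2 := by
  have hPP : (Aᵀ * A) * (Aᵀ * A) = Aᵀ * A := by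
    rw [Matrix.mul_assoc, ← Matrix.mul_assoc A Aᵀ A, hA, Matrix.one_mul]
  have hsym : (Aᵀ * A)ᵀ = Aᵀ * A := by
    rw [Matrix.transpose_mul, Matrix.transpose_transpose]
  have h1 : A.mulVec v ⬝ᵥ A.mulVec v = v ⬝ᵥ (Aᵀ * A).mulVec v := by
    rw [Matrix.dotProduct_mulVec, ← Matrix.mulVec_transpose, Matrix.mulVec_mulVec,
      dotProduct_comm]
  have h2 : (Aᵀ * A).mulVec v ⬝ᵥ (Aᵀ * A).mulVec v = v ⬝ᵥ (Aᵀ * A).mulVec v := by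
    rw [Matrix.dotProduct_mulVec, ← Matrix.mulVec_transpose, hsym, Matrix.mulVec_mulVec,
      hPP, dotProduct_comm]
  have hsq1 : ∑ i, (A.mulVec v i) ^ 2 = v ⬝ᵥ (Aᵀ * A).mulVec v := by
    rw [← h1]; simp [dotProduct, sq]
  have hsq2 : ∑ j, ((Aᵀ * A).mulVec v j) ^ 2 = v ⬝ᵥ (Aᵀ * A).mulVec v := by
    rw [← h2]; simp [dotProduct, sq]
  calc ∑ i, (A.mulVec v i) ^ 2 = ∑ j, ((Aᵀ * A).mulVec v j) ^ 2 := by rw [hsq1, hsq2]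
    _ ≤ ∑ j, v j ^ 2 := aux_proj _ hsym hPP v

lemma aux_frob (M : Matrix (Fin k) (Fin d) ℝ) (v : Fin d → ℝ) :
    ∑ i, (M.mulVec v i) ^ 2 ≤ (∑ i, ∑ j, M i j ^ 2) * (∑ j, v j ^ 2) := by
  rw [Finset.sum_mul]
  apply Finset.sum_le_sum
  intro i _
  exact Finset.sum_mul_sq_le_sq_mul_sq Finset.univ (fun j => M i j) v

end aux

/-- Let `A, Â` be `k × d` row-orthonormal matrices and
`g ∈ C¹(B_{ℝ^k}(1+εb))` with `|∂_i g| ≤ C₂`.  If `‖AᵀA - ÂᵀÂ‖_F ≤ δ`, then for every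
`x ∈ B_{ℝ^d}(1+εb)` one has `Âx, A(ÂᵀÂx) ∈ B_{ℝ^k}(1+εb)` and
`|g(Ax) - g(AÂᵀÂx)| ≤ C₂ √k (1+εb) δ`; in particular, with `f = g ∘ A` and
`f̂ = g ∘ (A ÂᵀÂ)`, `sup_{B_{ℝ^d}(1+εb)} |f - f̂| ≤ C₂ √k (1+εb) δ`. -/
theorem statement17
    (d k : ℕ) (hk : 0 < k) (hkd : k ≤ d) (εb C₂ δ : ℝ) (hεb : 0 ≤ εb) (hC₂ : 0 < C₂)
    (A Ah : Matrix (Fin k) (Fin d) ℝ) (hA : A * Aᵀ = 1) (hAh : Ah * Ahᵀ = 1)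
    (g : EuclideanSpace ℝ (Fin k) → ℝ) (G : EuclideanSpace ℝ (Fin k) → EuclideanSpace ℝ (Fin k))
    (hg : ∀ y ∈ Metric.closedBall (0 : EuclideanSpace ℝ (Fin k)) (1 + εb),
      HasGradientWithinAt g (G y) (Metric.closedBall 0 (1 + εb)) y)
    (hGbound : ∀ y ∈ Metric.closedBall (0 : EuclideanSpace ℝ (Fin k)) (1 + εb),
      ∀ i, |G y i| ≤ C₂)
    (hδ : frobNorm (Aᵀ * A - Ahᵀ * Ah) ≤ δ) :
    ∀ x : Fin d → ℝ, ∑ l, x l ^ 2 ≤ (1 + εb) ^ 2 →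
      ((WithLp.toLp 2 (Ah.mulVec x) : EuclideanSpace ℝ (Fin k)) ∈
          Metric.closedBall (0 : EuclideanSpace ℝ (Fin k)) (1 + εb) ∧
        (WithLp.toLp 2 (A.mulVec (Ahᵀ.mulVec (Ah.mulVec x))) : EuclideanSpace ℝ (Fin k)) ∈
          Metric.closedBall (0 : EuclideanSpace ℝ (Fin k)) (1 + εb)) ∧
      |g (WithLp.toLp 2 (A.mulVec x) : EuclideanSpace ℝ (Fin k)) -
          g (WithLp.toLp 2 (A.mulVec (Ahᵀ.mulVec (Ah.mulVec x))) : EuclideanSpace ℝ (Fin k))| ≤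
        C₂ * Real.sqrt k * (1 + εb) * δ := by
  intro x hx
  have h1εb : (0:ℝ) ≤ 1 + εb := by linarith
  -- norm of a Euclidean vector via sum of squares
  have normle : ∀ (u : EuclideanSpace ℝ (Fin k)) (r : ℝ), 0 ≤ r → (∑ i, u i ^ 2 ≤ r ^ 2) →
      ‖u‖ ≤ r := by
    intro u r hr hu
    rw [EuclideanSpace.norm_eq]
    have h : ∑ i, ‖u i‖ ^ 2 = ∑ i, u i ^ 2 := by
      simp [Real.norm_eq_abs, sq_abs]
    rw [h]
    calc Real.sqrt (∑ i, u i ^ 2) ≤ Real.sqrt (r ^ 2) := Real.sqrt_le_sqrt hu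
      _ = r := Real.sqrt_sq hr
  -- euclidean versions of the vectors
  set u : EuclideanSpace ℝ (Fin k) := WithLp.toLp 2 (A.mulVec x) with hu
  set w : EuclideanSpace ℝ (Fin k) := WithLp.toLp 2 (Ah.mulVec x) with hw
  set v : EuclideanSpace ℝ (Fin k) := WithLp.toLp 2 (A.mulVec (Ahᵀ.mulVec (Ah.mulVec x))) with hv
  -- sum-of-squares bounds
  have hAhx : ∑ i, (Ah.mulVec x i) ^ 2 ≤ (1 + εb) ^ 2 :=
    le_trans (aux_contract Ah hAh x) hx
  have hAhtAh : Ahᵀ * Ah * (Ahᵀ * Ah) = Ahᵀ * Ah := by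
    rw [Matrix.mul_assoc, ← Matrix.mul_assoc Ah Ahᵀ Ah, hAh, Matrix.one_mul]
  have hAhtAhx : ∑ j, (Ahᵀ.mulVec (Ah.mulVec x) j) ^ 2 ≤ (1 + εb) ^ 2 := by
    have e : Ahᵀ.mulVec (Ah.mulVec x) = (Ahᵀ * Ah).mulVec x := Matrix.mulVec_mulVec _ _ _
    rw [e]
    refine le_trans (aux_proj (Ahᵀ * Ah) ?_ hAhtAh x) hx
    rw [Matrix.transpose_mul, Matrix.transpose_transpose]
  have hAAhx : ∑ i, (A.mulVec (Ahᵀ.mulVec (Ah.mulVec x)) i) ^ 2 ≤ (1 + εb) ^ 2 :=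
    le_trans (aux_contract A hA _) hAhtAhx
  have hAx : ∑ i, (A.mulVec x i) ^ 2 ≤ (1 + εb) ^ 2 :=
    le_trans (aux_contract A hA x) hx
  have memAx : u ∈ Metric.closedBall (0 : EuclideanSpace ℝ (Fin k)) (1 + εb) :=
    mem_closedBall_zero_iff.mpr (normle u _ h1εb hAx)
  have memAhx : w ∈ Metric.closedBall (0 : EuclideanSpace ℝ (Fin k)) (1 + εb) :=
    mem_closedBall_zero_iff.mpr (normle w _ h1εb hAhx)
  have memAAhx : v ∈ Metric.closedBall (0 : EuclideanSpace ℝ (Fin k)) (1 + εb) :=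
    mem_closedBall_zero_iff.mpr (normle v _ h1εb hAAhx)
  refine ⟨⟨memAhx, memAAhx⟩, ?_⟩
  -- Lipschitz constant
  set L : ℝ := Real.sqrt k * C₂ with hL
  have hGnorm : ∀ y ∈ Metric.closedBall (0 : EuclideanSpace ℝ (Fin k)) (1 + εb),
      ‖G y‖ ≤ L := by
    intro y hy
    rw [EuclideanSpace.norm_eq]
    have hsum : ∑ i, ‖G y i‖ ^ 2 ≤ ∑ _i : Fin k, C₂ ^ 2 := by
      apply Finset.sum_le_sum
      intro i _
      have h := hGbound y hy i
      have h2 := abs_le.mp h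
      rw [Real.norm_eq_abs, sq_abs]
      exact sq_le_sq' h2.1 h2.2
    calc Real.sqrt (∑ i, ‖G y i‖ ^ 2) ≤ Real.sqrt (∑ _i : Fin k, C₂ ^ 2) :=
          Real.sqrt_le_sqrt hsum
      _ = Real.sqrt ((k : ℝ) * C₂ ^ 2) := by
          rw [Finset.sum_const, Finset.card_univ, Fintype.card_fin, nsmul_eq_mul]
      _ = Real.sqrt k * C₂ := by
          rw [Real.sqrt_mul (Nat.cast_nonneg k), Real.sqrt_sq hC₂.le]
  -- mean value inequality on the ball
  have lip : ‖g u - g v‖ ≤ L * ‖u - v‖ :=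
    (convex_closedBall (0 : EuclideanSpace ℝ (Fin k))
        (1 + εb)).norm_image_sub_le_of_norm_hasFDerivWithin_le
      (fun y hy => hg y hy)
      (fun y hy => by rw [LinearIsometryEquiv.norm_map]; exact hGnorm y hy)
      memAAhx memAx
  -- the difference of arguments
  set M : Matrix (Fin d) (Fin d) ℝ := Aᵀ * A - Ahᵀ * Ah with hM
  have hdiff : (A.mulVec x : Fin k → ℝ) - A.mulVec (Ahᵀ.mulVec (Ah.mulVec x)) =
      A.mulVec (M.mulVec x) := by
    have e1 : A.mulVec x = A.mulVec ((Aᵀ * A).mulVec x) := by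
      rw [Matrix.mulVec_mulVec, ← Matrix.mul_assoc, hA, Matrix.one_mul]
    have e2 : A.mulVec (Ahᵀ.mulVec (Ah.mulVec x)) = A.mulVec ((Ahᵀ * Ah).mulVec x) :=
      congrArg _ (Matrix.mulVec_mulVec x Ahᵀ Ah)
    rw [e1, e2, ← Matrix.mulVec_sub, ← Matrix.sub_mulVec]
  have hMx : ∑ i, (A.mulVec (M.mulVec x) i) ^ 2 ≤ (frobNorm M) ^ 2 * (1 + εb) ^ 2 := by
    calc ∑ i, (A.mulVec (M.mulVec x) i) ^ 2 ≤ ∑ j, (M.mulVec x j) ^ 2 :=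
          aux_contract A hA _
      _ ≤ (∑ i, ∑ j, M i j ^ 2) * (∑ l, x l ^ 2) := aux_frob M x
      _ ≤ (∑ i, ∑ j, M i j ^ 2) * (1 + εb) ^ 2 := by
          apply mul_le_mul_of_nonneg_left hx
          positivity
      _ = (frobNorm M) ^ 2 * (1 + εb) ^ 2 := by
          rw [frobNorm, Real.sq_sqrt (by positivity)]
  have hfrobnn : 0 ≤ frobNorm M := Real.sqrt_nonneg _
  have hnormdiff : ‖u - v‖ ≤ frobNorm M * (1 + εb) := by
    have e : u - v = (WithLp.toLp 2 (A.mulVec (M.mulVec x)) : EuclideanSpace ℝ (Fin k)) := by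
      rw [← hdiff, WithLp.toLp_sub]
    rw [e]
    exact normle _ _ (by positivity) (by rw [mul_pow]; exact hMx)
  have hδnn : 0 ≤ δ := le_trans hfrobnn hδ
  have hLnn : 0 ≤ L := by rw [hL]; positivity
  calc |g u - g v| ≤ L * ‖u - v‖ := lip
    _ ≤ L * (frobNorm M * (1 + εb)) := mul_le_mul_of_nonneg_left hnormdiff hLnn
    _ ≤ L * (δ * (1 + εb)) :=
        mul_le_mul_of_nonneg_left (mul_le_mul_of_nonneg_right hδ h1εb) hLnn
    _ = C₂ * Real.sqrt k * (1 + εb) * δ := by rw [hL]; ring
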